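/- Let (aₙ) and (Vₙ) be sequences of positive reals and suppose there exist 0 < a₋ ≤ a₊ < ∞ such that B²tₙ² + Vₙ ≤ a₊ n^{−6/7} and B²tₙ² + Vₙ ≥ a₋ n^{−6/7} for all large n, where tₙ, Vₙ > 0 and B > 0 and additionally for every k ∈ ℕ and m = n/k, the rescaled quantity B²tₙ² + kVₙ upper-bounds an analogous optimal objective at sample size m satisfying the same lower bound a₋ m^{−6/7}. Then there exists c > 0 with Vₙ ≥ c n^{−6/7} for all large n; in particular tₙ/√Vₙ is bounded. -/
import Mathlib


open Filter

/-- Abstract scaling argument: if the minimax objective `B²tₙ² + Vₙ` is sandwiched between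
`a₋ n^{−6/7}` and `a₊ n^{−6/7}`, and for every `k` the rescaled objective `B²tₙ² + k Vₙ`
dominates the minimax lower bound `a₋ (n/k)^{−6/7}` at sample size `m = n/k`, then
`Vₙ ≳ n^{−6/7}`; in particular `tₙ/√Vₙ` is bounded. -/
theorem variance_scaling_lower_bound (B : ℝ) (hB : 0 < B)
    (t V : ℕ → ℝ) (ht : ∀ n, 0 < t n) (hV : ∀ n, 0 < V n)
    (aminus aplus : ℝ) (h0 : 0 < aminus) (hle : aminus ≤ aplus)
    (hupper : ∀ᶠ n : ℕ in atTop,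
      B ^ 2 * t n ^ 2 + V n ≤ aplus * (n : ℝ) ^ (-(6 / 7 : ℝ)))
    (hlower : ∀ᶠ n : ℕ in atTop,
      aminus * (n : ℝ) ^ (-(6 / 7 : ℝ)) ≤ B ^ 2 * t n ^ 2 + V n)
    (hrescale : ∀ k : ℕ, 0 < k → ∀ᶠ n : ℕ in atTop,
      aminus * ((n : ℝ) / (k : ℝ)) ^ (-(6 / 7 : ℝ)) ≤ B ^ 2 * t n ^ 2 + (k : ℝ) * V n) :
    (∃ c > 0, ∀ᶠ n : ℕ in atTop, c * (n : ℝ) ^ (-(6 / 7 : ℝ)) ≤ V n) ∧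
    ∃ C : ℝ, ∀ᶠ n : ℕ in atTop, t n / Real.sqrt (V n) ≤ C := by
  have hap : 0 < aplus := lt_of_lt_of_le h0 hle
  -- pick k with k^{6/7} ≥ 2 aplus / aminus
  set r : ℝ := 2 * aplus / aminus with hr
  have hrpos : 0 < r := by positivity
  obtain ⟨k, hk⟩ := exists_nat_ge (r ^ ((7 : ℝ) / 6))
  have hrk : r ^ ((7 : ℝ) / 6) ≤ (k : ℝ) := hk
  have hkpos' : (0 : ℝ) < k := lt_of_lt_of_le (Real.rpow_pos_of_pos hrpos _) hrk
  have hkpos : 0 < k := by exact_mod_cast hkpos'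
  have hkpow : r ≤ (k : ℝ) ^ ((6 : ℝ) / 7) := by
    have := Real.rpow_le_rpow (Real.rpow_pos_of_pos hrpos _).le hrk
      (by norm_num : (0:ℝ) ≤ (6:ℝ)/7)
    rwa [← Real.rpow_mul hrpos.le, show (7:ℝ)/6 * (6/7) = 1 by norm_num,
      Real.rpow_one] at this
  have hkey : 2 * aplus ≤ aminus * (k : ℝ) ^ ((6 : ℝ) / 7) := by
    have := mul_le_mul_of_nonneg_left hkpow h0.le
    calc 2 * aplus = aminus * r := by rw [hr]; field_simp
    _ ≤ _ := this
  set c : ℝ := (aminus * (k : ℝ) ^ ((6 : ℝ) / 7) - aplus) / k with hc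
  have hcpos : 0 < c := by
    apply div_pos _ hkpos'
    linarith
  have hmain : ∀ᶠ n : ℕ in atTop, c * (n : ℝ) ^ (-(6 / 7 : ℝ)) ≤ V n := by
    filter_upwards [hupper, hrescale k hkpos, eventually_ge_atTop 1] with n h1 h2 h3
    have hn : (0 : ℝ) < n := by exact_mod_cast h3
    have hsplit : ((n : ℝ) / k) ^ (-(6 / 7 : ℝ))
        = (n : ℝ) ^ (-(6 / 7 : ℝ)) * (k : ℝ) ^ ((6 : ℝ) / 7) := by
      rw [Real.div_rpow hn.le hkpos'.le, div_eq_mul_inv, ← Real.rpow_neg hkpos'.le,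
        neg_neg]
    have hBt : B ^ 2 * t n ^ 2 ≤ aplus * (n : ℝ) ^ (-(6 / 7 : ℝ)) := by
      have := (hV n).le
      linarith
    have : aminus * (k : ℝ) ^ ((6 : ℝ) / 7) * (n : ℝ) ^ (-(6 / 7 : ℝ))
        ≤ aplus * (n : ℝ) ^ (-(6 / 7 : ℝ)) + (k : ℝ) * V n := by
      calc aminus * (k : ℝ) ^ ((6 : ℝ) / 7) * (n : ℝ) ^ (-(6 / 7 : ℝ))
          = aminus * (((n : ℝ) / k) ^ (-(6 / 7 : ℝ))) := by rw [hsplit]; ring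
        _ ≤ B ^ 2 * t n ^ 2 + (k : ℝ) * V n := h2
        _ ≤ _ := by linarith
    have hfin : (aminus * (k : ℝ) ^ ((6 : ℝ) / 7) - aplus) * (n : ℝ) ^ (-(6 / 7 : ℝ))
        ≤ (k : ℝ) * V n := by linarith
    rw [hc, div_mul_eq_mul_div, div_le_iff₀ hkpos', mul_comm (V n) (k : ℝ)]
    exact hfin
  refine ⟨⟨c, hcpos, hmain⟩, ⟨Real.sqrt (aplus / c) / B, ?_⟩⟩
  filter_upwards [hupper, hmain] with n h1 h2
  have hVn := hV n
  have hBt : B ^ 2 * t n ^ 2 ≤ aplus * (n : ℝ) ^ (-(6 / 7 : ℝ)) := by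
    linarith
  have hnV : (n : ℝ) ^ (-(6 / 7 : ℝ)) ≤ V n / c := by
    rw [le_div_iff₀ hcpos]; linarith [h2]
  have ht2 : t n ^ 2 ≤ aplus / c * V n / B ^ 2 := by
    have h4 : B ^ 2 * t n ^ 2 ≤ aplus * (V n / c) := by
      calc B ^ 2 * t n ^ 2 ≤ aplus * (n : ℝ) ^ (-(6 / 7 : ℝ)) := hBt
        _ ≤ aplus * (V n / c) := by
            exact mul_le_mul_of_nonneg_left hnV hap.le
    rw [le_div_iff₀ (by positivity : (0:ℝ) < B ^ 2)]
    calc t n ^ 2 * B ^ 2 = B ^ 2 * t n ^ 2 := by ring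
      _ ≤ aplus * (V n / c) := h4
      _ = aplus / c * V n := by ring
  have htle : t n ≤ Real.sqrt (aplus / c / B ^ 2) * Real.sqrt (V n) := by
    rw [← Real.sqrt_mul (by positivity)]
    have : t n ^ 2 ≤ aplus / c / B ^ 2 * V n := by
      calc t n ^ 2 ≤ aplus / c * V n / B ^ 2 := ht2
        _ = aplus / c / B ^ 2 * V n := by ring
    calc t n = Real.sqrt (t n ^ 2) := (Real.sqrt_sq (ht n).le).symm
      _ ≤ _ := Real.sqrt_le_sqrt this
  have hsV : 0 < Real.sqrt (V n) := Real.sqrt_pos.mpr hVn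
  rw [div_le_iff₀ hsV]
  calc t n ≤ Real.sqrt (aplus / c / B ^ 2) * Real.sqrt (V n) := htle
    _ = Real.sqrt (aplus / c) / B * Real.sqrt (V n) := by
        congr 1
        rw [Real.sqrt_div (by positivity) (B ^ 2), Real.sqrt_sq hB.le]
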